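/- Suppose that for each bounded Borel function f : S → ℝ the empirical means μ_n(f) = (1/n) Σ_{i=1}^n f(X_i) converge in probability to a degenerate (almost surely constant) random variable. Then the following are equivalent: (i) for each bounded Borel function f the sequence α_n(f) converges in probability; (ii) lim_n P(X_n ∈ B) exists for every Borel set B, and lim_n E[α_n(f)²] = lim_n (E[f(X_n)])² for each bounded Borel function f. -/

import Mathlib

open MeasureTheory ProbabilityTheory Filter Topology
open scoped ENNReal NNReal

variable {Ω S : Type*}

/-- `Filt X n` is the σ-field `𝓕_n = σ(X_1,…,X_n)` generated by the first `n` variables.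
Indexing convention: `X i` here denotes the paper's `X_{i+1}`, so that `Filt X 0 = ⊥`. -/
def Filt [MeasurableSpace S] (X : ℕ → Ω → S) (n : ℕ) : MeasurableSpace Ω :=
  ⨆ i ∈ Finset.range n, MeasurableSpace.comap (X i) inferInstance

/-- The predictive mean `α_n(f) = E[f(X_{n+1}) ∣ 𝓕_n]` (here the paper's `X_{n+1}` is `X n`). -/
noncomputable def predMean [MeasurableSpace Ω] [MeasurableSpace S]
    (P : Measure Ω) (X : ℕ → Ω → S) (f : S → ℝ) (n : ℕ) : Ω → ℝ :=
  P[(fun ω => f (X n ω)) | Filt X n]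

section Aux
variable {Ω : Type*} [MeasurableSpace Ω] {P : Measure Ω} [IsProbabilityMeasure P]

/-- Markov: L¹ convergence implies convergence in measure. -/
lemma myTendstoInMeasure_of_L1 {g : ℕ → Ω → ℝ} {l : Ω → ℝ}
    (hgi : ∀ n, Integrable (g n) P)
    (hli : Integrable l P)
    (h : Tendsto (fun n => ∫ ω, |g n ω - l ω| ∂P) atTop (𝓝 0)) :
    TendstoInMeasure P g atTop l := by
  rw [tendstoInMeasure_iff_dist]
  intro ε hε
  have key : ∀ n, (P {ω | ε ≤ dist (g n ω) (l ω)}).toReal ≤ ε⁻¹ * ∫ ω, |g n ω - l ω| ∂P := by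
    intro n
    have hint : Integrable (fun ω => |g n ω - l ω|) P := ((hgi n).sub hli).abs
    have := mul_meas_ge_le_integral_of_nonneg
      (ae_of_all _ (fun ω => abs_nonneg (g n ω - l ω))) hint ε
    have hset : {ω | ε ≤ dist (g n ω) (l ω)} = {ω | ε ≤ |g n ω - l ω|} := by
      simp [Real.dist_eq]
    rw [hset]
    rw [mul_comm, ← le_div_iff₀ hε] at this
    calc (P {ω | ε ≤ |g n ω - l ω|}).toReal ≤ (∫ ω, |g n ω - l ω| ∂P) / ε := this
      _ = ε⁻¹ * ∫ ω, |g n ω - l ω| ∂P := by rw [div_eq_inv_mul]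
  have h0 : ∀ n, (0:ℝ) ≤ (P {ω | ε ≤ dist (g n ω) (l ω)}).toReal := fun n => ENNReal.toReal_nonneg
  have hto : Tendsto (fun n => (P {ω | ε ≤ dist (g n ω) (l ω)}).toReal) atTop (𝓝 0) := by
    have : Tendsto (fun n => ε⁻¹ * ∫ ω, |g n ω - l ω| ∂P) atTop (𝓝 0) := by
      simpa using h.const_mul ε⁻¹
    exact squeeze_zero h0 key this
  have hfin : ∀ n, P {ω | ε ≤ dist (g n ω) (l ω)} ≠ ∞ := fun n => measure_ne_top P _
  have := (ENNReal.tendsto_ofReal hto)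
  simpa [ENNReal.ofReal_toReal, hfin] using this

/-- The a.e.-limit bound: a limit in measure of functions a.e. bounded by `C` is a.e. bounded. -/
lemma myAeBound_of_tendstoInMeasure {g : ℕ → Ω → ℝ} {l : Ω → ℝ} {C : ℝ}
    (hbd : ∀ n, ∀ᵐ ω ∂P, |g n ω| ≤ C)
    (h : TendstoInMeasure P g atTop l) : ∀ᵐ ω ∂P, |l ω| ≤ C := by
  obtain ⟨ns, -, hae⟩ := h.exists_seq_tendsto_ae
  filter_upwards [hae, ae_all_iff.2 fun k => hbd (ns k)] with ω hω hbω
  exact le_of_tendsto ((continuous_abs.tendsto _).comp hω) (Eventually.of_forall hbω)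

/-- Bounded convergence: uniformly bounded + in measure ⇒ L¹. -/
lemma myTendsto_L1_of_tendstoInMeasure {g : ℕ → Ω → ℝ} {l : Ω → ℝ} {C : ℝ}
    (hmeas : ∀ n, AEStronglyMeasurable (g n) P) (hlmeas : AEStronglyMeasurable l P)
    (hbd : ∀ n, ∀ᵐ ω ∂P, |g n ω| ≤ C) (hlbd : ∀ᵐ ω ∂P, |l ω| ≤ C)
    (h : TendstoInMeasure P g atTop l) :
    Tendsto (fun n => ∫ ω, |g n ω - l ω| ∂P) atTop (𝓝 0) := by
  apply tendsto_of_subseq_tendsto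
  intro ns hns
  have h' : TendstoInMeasure P (fun k => g (ns k)) atTop l := fun ε hε => (h ε hε).comp hns
  obtain ⟨ms, -, hae⟩ := h'.exists_seq_tendsto_ae
  refine ⟨ms, ?_⟩
  have := tendsto_integral_of_dominated_convergence (F := fun k ω => |g (ns (ms k)) ω - l ω|)
    (f := fun _ => (0:ℝ)) (bound := fun _ => 2 * C)
    (fun k => ((hmeas (ns (ms k))).sub hlmeas).norm)
    (integrable_const _)
    (fun k => by
      filter_upwards [hbd (ns (ms k)), hlbd] with ω h1 h2
      have : |g (ns (ms k)) ω - l ω| ≤ |g (ns (ms k)) ω| + |l ω| := abs_sub _ _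
      simp only [Real.norm_eq_abs, abs_abs]
      linarith)
    (by
      filter_upwards [hae] with ω hω
      have : Tendsto (fun k => g (ns (ms k)) ω - l ω) atTop (𝓝 (l ω - l ω)) :=
        hω.sub tendsto_const_nhds
      simpa [Function.comp_def] using (continuous_abs.tendsto _).comp this)
  simpa using this

/-- Limits in measure are a.e. unique. -/
lemma myTendstoInMeasure_unique {g : ℕ → Ω → ℝ} {l l' : Ω → ℝ}
    (h : TendstoInMeasure P g atTop l) (h' : TendstoInMeasure P g atTop l') :
    l =ᵐ[P] l' := by
  obtain ⟨ns, hmono, hae⟩ := h.exists_seq_tendsto_ae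
  have h'' : TendstoInMeasure P (fun k => g (ns k)) atTop l' :=
    fun ε hε => (h' ε hε).comp hmono.tendsto_atTop
  obtain ⟨ms, hms, hae'⟩ := h''.exists_seq_tendsto_ae
  filter_upwards [hae, hae'] with ω hω hω'
  exact tendsto_nhds_unique (hω.comp hms.tendsto_atTop) hω'


/-- L² convergence to 0 implies convergence in measure to 0. -/
lemma myTendstoInMeasure_zero_of_L2 {g : ℕ → Ω → ℝ}
    (hint : ∀ n, Integrable (fun ω => (g n ω) ^ 2) P)
    (h : Tendsto (fun n => ∫ ω, (g n ω) ^ 2 ∂P) atTop (𝓝 0)) :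
    TendstoInMeasure P g atTop (fun _ => (0:ℝ)) := by
  rw [tendstoInMeasure_iff_dist]
  intro ε hε
  have hset : ∀ n, {ω | ε ≤ dist (g n ω) 0} = {ω | ε ^ 2 ≤ (g n ω) ^ 2} := by
    intro n
    ext ω
    simp only [Set.mem_setOf_eq, Real.dist_eq, sub_zero]
    rw [← sq_abs (g n ω)]
    exact ⟨fun h' => pow_le_pow_left₀ hε.le h' 2,
      fun h' => (pow_le_pow_iff_left₀ hε.le (abs_nonneg _) (by norm_num)).1 h'⟩
  have key : ∀ n, (P {ω | ε ≤ dist (g n ω) 0}).toReal ≤ (ε ^ 2)⁻¹ * ∫ ω, (g n ω) ^ 2 ∂P := by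
    intro n
    have := mul_meas_ge_le_integral_of_nonneg
      (ae_of_all _ (fun ω => sq_nonneg (g n ω))) (hint n) (ε ^ 2)
    rw [hset n]
    rw [mul_comm, ← le_div_iff₀ (by positivity)] at this
    calc (P {ω | ε ^ 2 ≤ (g n ω) ^ 2}).toReal ≤ (∫ ω, (g n ω) ^ 2 ∂P) / ε ^ 2 := this
      _ = (ε ^ 2)⁻¹ * ∫ ω, (g n ω) ^ 2 ∂P := by rw [div_eq_inv_mul]
  have hto : Tendsto (fun n => (P {ω | ε ≤ dist (g n ω) 0}).toReal) atTop (𝓝 0) := by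
    have h2 : Tendsto (fun n => (ε ^ 2)⁻¹ * ∫ ω, (g n ω) ^ 2 ∂P) atTop (𝓝 0) := by
      simpa using h.const_mul (ε ^ 2)⁻¹
    exact squeeze_zero (fun n => ENNReal.toReal_nonneg) key h2
  have hfin : ∀ n, P {ω | ε ≤ dist (g n ω) 0} ≠ ∞ := fun n => measure_ne_top P _
  simpa [ENNReal.ofReal_toReal, hfin] using ENNReal.tendsto_ofReal hto

/-- Convergence in measure is additive. -/
lemma myTendstoInMeasure_add {g h : ℕ → Ω → ℝ} {a b : Ω → ℝ}
    (hg : TendstoInMeasure P g atTop a) (hh : TendstoInMeasure P h atTop b) :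
    TendstoInMeasure P (fun n ω => g n ω + h n ω) atTop (fun ω => a ω + b ω) := by
  rw [tendstoInMeasure_iff_dist] at hg hh ⊢
  intro ε hε
  have hsub : ∀ n, {ω | ε ≤ dist (g n ω + h n ω) (a ω + b ω)} ⊆
      {ω | ε / 2 ≤ dist (g n ω) (a ω)} ∪ {ω | ε / 2 ≤ dist (h n ω) (b ω)} := by
    intro n ω hω
    simp only [Set.mem_union, Set.mem_setOf_eq]
    by_contra hc
    push_neg at hc
    obtain ⟨h1, h2⟩ := hc
    simp only [Set.mem_setOf_eq, Real.dist_eq] at hω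
    rw [Real.dist_eq] at h1 h2
    have : |g n ω + h n ω - (a ω + b ω)| ≤ |g n ω - a ω| + |h n ω - b ω| := by
      have : g n ω + h n ω - (a ω + b ω) = (g n ω - a ω) + (h n ω - b ω) := by ring
      rw [this]; exact abs_add_le _ _
    linarith
  have hlim : Tendsto (fun n => P ({ω | ε / 2 ≤ dist (g n ω) (a ω)} ∪
      {ω | ε / 2 ≤ dist (h n ω) (b ω)})) atTop (𝓝 0) := by
    have := (hg _ (half_pos hε)).add (hh _ (half_pos hε))
    rw [add_zero] at this
    exact tendsto_of_tendsto_of_tendsto_of_le_of_le tendsto_const_nhds this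
      (fun n => zero_le) (fun n => measure_union_le _ _)
  exact tendsto_of_tendsto_of_tendsto_of_le_of_le tendsto_const_nhds hlim
    (fun n => zero_le) (fun n => measure_mono (hsub n))


/-- L¹ convergence gives convergence of integrals. -/
lemma myTendsto_integral_of_L1 {g : ℕ → Ω → ℝ} {l : Ω → ℝ}
    (hgi : ∀ n, Integrable (g n) P) (hli : Integrable l P)
    (h : Tendsto (fun n => ∫ ω, |g n ω - l ω| ∂P) atTop (𝓝 0)) :
    Tendsto (fun n => ∫ ω, g n ω ∂P) atTop (𝓝 (∫ ω, l ω ∂P)) := by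
  rw [tendsto_iff_dist_tendsto_zero]
  refine squeeze_zero (fun n => dist_nonneg) (fun n => ?_) h
  rw [Real.dist_eq, ← integral_sub (hgi n) hli]
  calc |∫ ω, (g n ω - l ω) ∂P| = ‖∫ ω, (g n ω - l ω) ∂P‖ := (Real.norm_eq_abs _).symm
    _ ≤ ∫ ω, ‖g n ω - l ω‖ ∂P := norm_integral_le_integral_norm _
    _ = ∫ ω, |g n ω - l ω| ∂P := by simp [Real.norm_eq_abs]

/-- L¹ convergence of a bounded sequence gives convergence of integrals of squares. -/
lemma myTendsto_integral_sq_of_L1 {g : ℕ → Ω → ℝ} {l : Ω → ℝ} {C : ℝ}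
    (hmeas : ∀ n, AEStronglyMeasurable (g n) P) (hlmeas : AEStronglyMeasurable l P)
    (hbd : ∀ n, ∀ᵐ ω ∂P, |g n ω| ≤ C) (hlbd : ∀ᵐ ω ∂P, |l ω| ≤ C)
    (h : Tendsto (fun n => ∫ ω, |g n ω - l ω| ∂P) atTop (𝓝 0)) :
    Tendsto (fun n => ∫ ω, (g n ω) ^ 2 ∂P) atTop (𝓝 (∫ ω, (l ω) ^ 2 ∂P)) := by
  have hC0 : 0 ≤ C := by
    have h0 := hbd 0
    by_contra hc
    push_neg at hc
    have : ∀ᵐ ω ∂P, False := by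
      filter_upwards [h0] with ω hω
      exact absurd (le_trans (abs_nonneg _) hω) (not_le.2 hc)
    rcases (by simpa using this : P = 0) with h3
    exact (IsProbabilityMeasure.ne_zero P) h3
  have hsqmeas : ∀ h' : Ω → ℝ, AEStronglyMeasurable h' P →
      AEStronglyMeasurable (fun ω => (h' ω) ^ 2) P := fun h' hh =>
    (hh.mul hh).congr (ae_of_all _ fun ω => by simp [Pi.mul_apply, sq])
  have hsqint : ∀ (h' : Ω → ℝ), AEStronglyMeasurable h' P → (∀ᵐ ω ∂P, |h' ω| ≤ C) →
      Integrable (fun ω => (h' ω) ^ 2) P := fun h' hh hb =>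
    (memLp_top_of_bound (hsqmeas h' hh) (C ^ 2) (by
      filter_upwards [hb] with ω hω
      rw [Real.norm_eq_abs, abs_of_nonneg (sq_nonneg _), ← sq_abs]
      exact pow_le_pow_left₀ (abs_nonneg _) hω 2)).integrable le_top
  have hgi : ∀ n, Integrable (g n) P := fun n =>
    (memLp_top_of_bound (hmeas n) C (by simpa [Real.norm_eq_abs] using hbd n)).integrable le_top
  have hli : Integrable l P :=
    (memLp_top_of_bound hlmeas C (by simpa [Real.norm_eq_abs] using hlbd)).integrable le_top
  apply myTendsto_integral_of_L1 (fun n => hsqint _ (hmeas n) (hbd n)) (hsqint _ hlmeas hlbd)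
  refine squeeze_zero (fun n => integral_nonneg fun ω => abs_nonneg _) (fun n => ?_)
    (by simpa using h.const_mul (2 * C))
  have step : ∫ ω, |(g n ω) ^ 2 - (l ω) ^ 2| ∂P ≤ ∫ ω, 2 * C * |g n ω - l ω| ∂P := by
    refine integral_mono_ae ((hsqint _ (hmeas n) (hbd n)).sub (hsqint _ hlmeas hlbd)).abs
      (((hgi n).sub hli).abs.const_mul _) ?_
    filter_upwards [hbd n, hlbd] with ω h1 h2
    have e : (g n ω) ^ 2 - (l ω) ^ 2 = (g n ω - l ω) * (g n ω + l ω) := by ring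
    rw [e, abs_mul]
    have : |g n ω + l ω| ≤ 2 * C := (abs_add_le _ _).trans (by linarith)
    calc |g n ω - l ω| * |g n ω + l ω| ≤ |g n ω - l ω| * (2 * C) :=
          mul_le_mul_of_nonneg_left this (abs_nonneg _)
      _ = 2 * C * |g n ω - l ω| := by ring
  calc ∫ ω, |(g n ω) ^ 2 - (l ω) ^ 2| ∂P ≤ ∫ ω, 2 * C * |g n ω - l ω| ∂P := step
    _ = 2 * C * ∫ ω, |g n ω - l ω| ∂P := integral_const_mul _ _


lemma myIntegrable_of_bound {h' : Ω → ℝ} (hh : AEStronglyMeasurable h' P) (C : ℝ)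
    (hb : ∀ᵐ ω ∂P, |h' ω| ≤ C) : Integrable h' P :=
  (memLp_top_of_bound hh C (by simpa [Real.norm_eq_abs] using hb)).integrable le_top

lemma myIntegrable_sq {h' : Ω → ℝ} (hh : AEStronglyMeasurable h' P) (C : ℝ)
    (hb : ∀ᵐ ω ∂P, |h' ω| ≤ C) : Integrable (fun ω => h' ω ^ 2) P := by
  refine myIntegrable_of_bound ((hh.mul hh).congr
    (ae_of_all _ fun ω => by simp [Pi.mul_apply, sq])) (C ^ 2) ?_
  filter_upwards [hb] with ω hω
  rw [abs_of_nonneg (sq_nonneg _), ← sq_abs]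
  exact pow_le_pow_left₀ (abs_nonneg _) hω 2

end Aux

section Pred
variable [MeasurableSpace Ω] [MeasurableSpace S] {P : Measure Ω} [IsProbabilityMeasure P]
  {X : ℕ → Ω → S}

lemma Filt_le (hX : ∀ i, Measurable (X i)) (n : ℕ) : Filt X n ≤ ‹MeasurableSpace Ω› :=
  iSup₂_le fun i _ => (hX i).comap_le

lemma Filt_mono {m n : ℕ} (h : m ≤ n) : Filt X m ≤ Filt X n :=
  biSup_mono fun i hi => Finset.mem_range.2 ((Finset.mem_range.1 hi).trans_le h)

lemma measurable_filt_of_lt {j k : ℕ} (hjk : j < k) : Measurable[Filt X k] (X j) := by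
  have hle : MeasurableSpace.comap (X j) inferInstance ≤ Filt X k := by
    have := le_iSup₂ (f := fun i (_ : i ∈ Finset.range k) => MeasurableSpace.comap (X i)
      (inferInstance : MeasurableSpace S)) j (Finset.mem_range.2 hjk)
    exact this
  exact fun s hs => hle _ ⟨s, hs, rfl⟩

lemma key_L2 (hX : ∀ i, Measurable (X i)) {f : S → ℝ} (hf : Measurable f)
    {C : ℝ} (hC0 : 0 ≤ C) (hC : ∀ x, |f x| ≤ C) (n : ℕ) :
    ∫ ω, (∑ k ∈ Finset.range n, (f (X k ω) - predMean P X f k ω)) ^ 2 ∂P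
      ≤ n * (4 * C ^ 2) := by
  set D : ℕ → Ω → ℝ := fun k ω => f (X k ω) - predMean P X f k ω with hD
  have hle := Filt_le (X := X) hX
  have hfX_meas : ∀ k, Measurable fun ω => f (X k ω) := fun k => hf.comp (hX k)
  have hfX_int : ∀ k, Integrable (fun ω => f (X k ω)) P := fun k =>
    (memLp_top_of_bound (hfX_meas k).aestronglyMeasurable C
      (ae_of_all _ fun ω => by simpa [Real.norm_eq_abs] using hC (X k ω))).integrable le_top
  have hpm_sm : ∀ k, StronglyMeasurable[Filt X k] (predMean P X f k) := fun k =>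
    stronglyMeasurable_condExp
  have hpm_meas : ∀ k, AEStronglyMeasurable (predMean P X f k) P := fun k =>
    ((hpm_sm k).mono (hle k)).aestronglyMeasurable
  have hpm_int : ∀ k, Integrable (predMean P X f k) P := fun k => integrable_condExp
  have hpm_bd : ∀ k, ∀ᵐ ω ∂P, |predMean P X f k ω| ≤ C := fun k => by
    have := ae_bdd_condExp_of_ae_bdd (m := Filt X k) (μ := P) (R := ⟨C, hC0⟩)
      (f := fun ω => f (X k ω)) (ae_of_all _ fun ω => hC (X k ω))
    exact this
  have hD_meas : ∀ k, AEStronglyMeasurable (D k) P := fun k =>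
    (hfX_meas k).aestronglyMeasurable.sub (hpm_meas k)
  have hD_bd : ∀ k, ∀ᵐ ω ∂P, |D k ω| ≤ 2 * C := fun k => by
    filter_upwards [hpm_bd k] with ω h1
    have h2 := hC (X k ω)
    calc |D k ω| ≤ |f (X k ω)| + |predMean P X f k ω| := abs_sub _ _
      _ ≤ 2 * C := by linarith
  have hDD_int : ∀ j k, Integrable (fun ω => D j ω * D k ω) P := fun j k =>
    (memLp_top_of_bound ((hD_meas j).mul (hD_meas k)) (4 * C ^ 2)
      (by
        filter_upwards [hD_bd j, hD_bd k] with ω h1 h2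
        simp only [Pi.mul_apply, Real.norm_eq_abs, abs_mul]
        nlinarith [abs_nonneg (D j ω), abs_nonneg (D k ω)])).integrable le_top
  have hD_sm : ∀ j k, j < k → StronglyMeasurable[Filt X k] (D j) := fun j k hjk =>
    ((hf.comp (measurable_filt_of_lt hjk)).stronglyMeasurable).sub
      ((hpm_sm j).mono (Filt_mono hjk.le))
  have hDf_int : ∀ j k, Integrable (fun ω => D j ω * f (X k ω)) P := fun j k =>
    (memLp_top_of_bound ((hD_meas j).mul (hfX_meas k).aestronglyMeasurable) (2 * C * C)
      (by
        filter_upwards [hD_bd j] with ω h1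
        simp only [Pi.mul_apply, Real.norm_eq_abs, abs_mul]
        have h2 := hC (X k ω)
        nlinarith [abs_nonneg (D j ω), abs_nonneg (f (X k ω))])).integrable le_top
  have hDpm_int : ∀ j k, Integrable (fun ω => D j ω * predMean P X f k ω) P := fun j k =>
    (memLp_top_of_bound ((hD_meas j).mul (hpm_meas k)) (2 * C * C)
      (by
        filter_upwards [hD_bd j, hpm_bd k] with ω h1 h2
        simp only [Pi.mul_apply, Real.norm_eq_abs, abs_mul]
        nlinarith [abs_nonneg (D j ω), abs_nonneg (predMean P X f k ω)])).integrable le_top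
  have ortho : ∀ j k, j < k → ∫ ω, D j ω * D k ω ∂P = 0 := by
    intro j k hjk
    haveI : SigmaFinite (P.trim (hle k)) := inferInstance
    have hmul := condExp_mul_of_stronglyMeasurable_left (μ := P) (m := Filt X k)
      (hD_sm j k hjk) (hDf_int j k) (hfX_int k)
    have e1 : ∫ ω, D j ω * f (X k ω) ∂P = ∫ ω, D j ω * predMean P X f k ω ∂P := by
      rw [← integral_condExp (hle k) (f := fun ω => D j ω * f (X k ω))]
      exact integral_congr_ae hmul
    have e2 : ∀ ω, D j ω * D k ω = D j ω * f (X k ω) - D j ω * predMean P X f k ω := by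
      intro ω; simp only [hD]; ring
    calc ∫ ω, D j ω * D k ω ∂P
        = ∫ ω, (D j ω * f (X k ω) - D j ω * predMean P X f k ω) ∂P := by simp_rw [e2]
      _ = (∫ ω, D j ω * f (X k ω) ∂P) - ∫ ω, D j ω * predMean P X f k ω ∂P :=
          integral_sub (hDf_int j k) (hDpm_int j k)
      _ = 0 := by rw [e1, sub_self]
  have diag : ∀ k, ∫ ω, D k ω * D k ω ∂P ≤ 4 * C ^ 2 := by
    intro k
    have : ∫ ω, D k ω * D k ω ∂P ≤ ∫ _ω, (4 * C ^ 2 : ℝ) ∂P := by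
      refine integral_mono_ae (hDD_int k k) (integrable_const _) ?_
      filter_upwards [hD_bd k] with ω h1
      nlinarith [abs_nonneg (D k ω), sq_abs (D k ω), abs_le.1 h1]
    simpa using this
  have expand : ∀ ω, (∑ k ∈ Finset.range n, D k ω) ^ 2
      = ∑ j ∈ Finset.range n, ∑ k ∈ Finset.range n, D j ω * D k ω := by
    intro ω; rw [sq, Finset.sum_mul_sum]
  calc ∫ ω, (∑ k ∈ Finset.range n, D k ω) ^ 2 ∂P
      = ∑ j ∈ Finset.range n, ∑ k ∈ Finset.range n, ∫ ω, D j ω * D k ω ∂P := by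
        simp_rw [expand]
        rw [integral_finset_sum _ (fun j _ => integrable_finset_sum _ (fun k _ => hDD_int j k))]
        exact Finset.sum_congr rfl fun j _ =>
          integral_finset_sum _ (fun k _ => hDD_int j k)
    _ ≤ ∑ j ∈ Finset.range n, ∑ k ∈ Finset.range n, (if j = k then 4 * C ^ 2 else 0) := by
        refine Finset.sum_le_sum fun j _ => Finset.sum_le_sum fun k _ => ?_
        rcases lt_trichotomy j k with h | h | h
        · simp [ortho j k h, h.ne]
        · simpa [h] using diag k
        · have : ∫ ω, D j ω * D k ω ∂P = ∫ ω, D k ω * D j ω ∂P := by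
            simp_rw [mul_comm]
          simp [this, ortho k j h, h.ne']
    _ = n * (4 * C ^ 2) := by
        have : ∀ j ∈ Finset.range n,
            (∑ k ∈ Finset.range n, (if j = k then (4 * C ^ 2 : ℝ) else 0)) = 4 * C ^ 2 := by
          intro j hj
          rw [Finset.sum_ite_eq (Finset.range n) j (fun _ => (4 * C ^ 2 : ℝ))]
          simp [hj]
        rw [Finset.sum_congr rfl this]
        simp [Finset.sum_const, mul_comm]

lemma predMean_aesm (hX : ∀ i, Measurable (X i)) (f : S → ℝ) (n : ℕ) :
    AEStronglyMeasurable (predMean P X f n) P :=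
  (stronglyMeasurable_condExp.mono (Filt_le hX n)).aestronglyMeasurable

lemma predMean_bd {f : S → ℝ} {C : ℝ} (hC0 : 0 ≤ C) (hC : ∀ x, |f x| ≤ C) (n : ℕ) :
    ∀ᵐ ω ∂P, |predMean P X f n ω| ≤ C := by
  have := ae_bdd_condExp_of_ae_bdd (m := Filt X n) (μ := P) (R := ⟨C, hC0⟩)
    (f := fun ω => f (X n ω)) (ae_of_all _ fun ω => hC (X n ω))
  exact this

lemma predMean_integral (hX : ∀ i, Measurable (X i)) (f : S → ℝ) (n : ℕ) :
    ∫ ω, predMean P X f n ω ∂P = ∫ ω, f (X n ω) ∂P :=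
  integral_condExp (Filt_le hX n)

lemma limit_is_constant (hX : ∀ i, Measurable (X i)) {f : S → ℝ} (hf : Measurable f)
    {C : ℝ} (hC0 : 0 ≤ C) (hC : ∀ x, |f x| ≤ C) {l : Ω → ℝ} {c : ℝ}
    (hl : TendstoInMeasure P (fun n => predMean P X f n) atTop l)
    (hc : TendstoInMeasure P (fun n ω => (∑ i ∈ Finset.range n, f (X i ω)) / n) atTop
      (fun _ => c)) :
    l =ᵐ[P] fun _ => c := by
  have hle := Filt_le (X := X) hX
  have hpm_meas : ∀ k, AEStronglyMeasurable (predMean P X f k) P := predMean_aesm hX f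
  have hpm_bd : ∀ k, ∀ᵐ ω ∂P, |predMean P X f k ω| ≤ C := predMean_bd hC0 hC
  have hpm_int : ∀ k, Integrable (predMean P X f k) P := fun k => integrable_condExp
  have hfX_meas : ∀ k, Measurable fun ω => f (X k ω) := fun k => hf.comp (hX k)
  have hlm : AEStronglyMeasurable l P :=
    (hl.aemeasurable (fun n => (hpm_meas n).aemeasurable)).aestronglyMeasurable
  have hlb : ∀ᵐ ω ∂P, |l ω| ≤ C := myAeBound_of_tendstoInMeasure hpm_bd hl
  have hli : Integrable l P := myIntegrable_of_bound hlm C hlb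
  have hL1 := myTendsto_L1_of_tendstoInMeasure hpm_meas hlm hpm_bd hlb hl
  have hces : Tendsto (fun n : ℕ =>
      (n:ℝ)⁻¹ * ∑ k ∈ Finset.range n, ∫ ω, |predMean P X f k ω - l ω| ∂P) atTop (𝓝 0) := by
    simpa using hL1.cesaro
  set A : ℕ → Ω → ℝ := fun n ω => (n:ℝ)⁻¹ * ∑ k ∈ Finset.range n, predMean P X f k ω with hA
  have hAmeas : ∀ n, AEStronglyMeasurable (A n) P := fun n =>
    (Finset.aestronglyMeasurable_fun_sum _ (fun k _ => hpm_meas k)).const_mul _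
  have hAint : ∀ n, Integrable (A n) P := fun n =>
    ((integrable_finset_sum _ (fun k _ => hpm_int k)).const_mul _)
  have hAl : TendstoInMeasure P A atTop l := by
    apply myTendstoInMeasure_of_L1 hAint hli
    refine squeeze_zero'
      (Eventually.of_forall fun n => integral_nonneg fun ω => abs_nonneg _) ?_ hces
    filter_upwards [Ici_mem_atTop 1] with n hn
    have hnpos : (0:ℝ) < n := by exact_mod_cast Nat.lt_of_lt_of_le Nat.zero_lt_one hn
    have hpt : ∀ ω, |A n ω - l ω|
        ≤ (n:ℝ)⁻¹ * ∑ k ∈ Finset.range n, |predMean P X f k ω - l ω| := by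
      intro ω
      have he : A n ω - l ω
          = (n:ℝ)⁻¹ * ∑ k ∈ Finset.range n, (predMean P X f k ω - l ω) := by
        rw [hA, Finset.sum_sub_distrib, Finset.sum_const, Finset.card_range, nsmul_eq_mul]
        field_simp
      rw [he, abs_mul, abs_of_nonneg (inv_nonneg.2 hnpos.le)]
      exact mul_le_mul_of_nonneg_left (Finset.abs_sum_le_sum_abs _ _) (inv_nonneg.2 hnpos.le)
    calc ∫ ω, |A n ω - l ω| ∂P
        ≤ ∫ ω, (n:ℝ)⁻¹ * ∑ k ∈ Finset.range n, |predMean P X f k ω - l ω| ∂P :=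
          integral_mono ((hAint n).sub hli).abs
            ((integrable_finset_sum _ (fun k _ => ((hpm_int k).sub hli).abs)).const_mul _) hpt
      _ = (n:ℝ)⁻¹ * ∑ k ∈ Finset.range n, ∫ ω, |predMean P X f k ω - l ω| ∂P := by
          rw [integral_const_mul]
          congr 1
          exact integral_finset_sum _ (fun k _ => ((hpm_int k).sub hli).abs)
  set G : ℕ → Ω → ℝ := fun n ω => (∑ i ∈ Finset.range n, f (X i ω)) / n - A n ω with hG
  have hGeq : ∀ n ω, G n ω
      = (n:ℝ)⁻¹ * ∑ k ∈ Finset.range n, (f (X k ω) - predMean P X f k ω) := by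
    intro n ω
    simp only [hG, hA]
    rw [Finset.sum_sub_distrib, div_eq_inv_mul]
    ring
  have hGmeas : ∀ n, AEStronglyMeasurable (G n) P := fun n => by
    have h1 : AEStronglyMeasurable (fun ω => ∑ i ∈ Finset.range n, f (X i ω)) P :=
      (Finset.aestronglyMeasurable_fun_sum _ (fun k _ => (hfX_meas k).aestronglyMeasurable))
    refine AEStronglyMeasurable.sub ?_ (hAmeas n)
    exact (h1.const_mul ((n:ℝ)⁻¹)).congr (ae_of_all _ fun ω => (div_eq_inv_mul _ _).symm)
  have hGbd : ∀ n, ∀ᵐ ω ∂P, |G n ω| ≤ 2 * C := by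
    intro n
    filter_upwards [ae_all_iff.2 hpm_bd] with ω hω
    rw [hGeq]
    rcases Nat.eq_zero_or_pos n with hn0 | hn0
    · simp [hn0]
      positivity
    have hnpos : (0:ℝ) < n := by exact_mod_cast hn0
    have hbd1 : ∀ k ∈ Finset.range n, |f (X k ω) - predMean P X f k ω| ≤ 2 * C := by
      intro k _
      calc |f (X k ω) - predMean P X f k ω| ≤ |f (X k ω)| + |predMean P X f k ω| := abs_sub _ _
        _ ≤ 2 * C := by have := hC (X k ω); have := hω k; linarith
    calc |(n:ℝ)⁻¹ * ∑ k ∈ Finset.range n, (f (X k ω) - predMean P X f k ω)|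
        ≤ (n:ℝ)⁻¹ * ∑ k ∈ Finset.range n, |f (X k ω) - predMean P X f k ω| := by
          rw [abs_mul, abs_of_nonneg (inv_nonneg.2 hnpos.le)]
          exact mul_le_mul_of_nonneg_left (Finset.abs_sum_le_sum_abs _ _)
            (inv_nonneg.2 hnpos.le)
      _ ≤ (n:ℝ)⁻¹ * (n * (2 * C)) := by
          refine mul_le_mul_of_nonneg_left ?_ (inv_nonneg.2 hnpos.le)
          calc (∑ k ∈ Finset.range n, |f (X k ω) - predMean P X f k ω|)
              ≤ ∑ _k ∈ Finset.range n, (2 * C) := Finset.sum_le_sum hbd1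
            _ = n * (2 * C) := by simp [Finset.sum_const, Finset.card_range, mul_comm]
      _ = 2 * C := by field_simp
  have hGsqint : ∀ n, Integrable (fun ω => (G n ω) ^ 2) P := fun n =>
    myIntegrable_sq (hGmeas n) (2 * C) (hGbd n)
  have hG2 : Tendsto (fun n => ∫ ω, (G n ω) ^ 2 ∂P) atTop (𝓝 0) := by
    refine squeeze_zero'
      (Eventually.of_forall fun n => integral_nonneg fun ω => sq_nonneg _)
      ?_ (tendsto_const_div_atTop_nhds_zero_nat (4 * C ^ 2))
    filter_upwards [Ici_mem_atTop 1] with n hn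
    have hnpos : (0:ℝ) < n := by exact_mod_cast Nat.lt_of_lt_of_le Nat.zero_lt_one hn
    have he : ∫ ω, (G n ω) ^ 2 ∂P = ((n:ℝ)⁻¹) ^ 2
        * ∫ ω, (∑ k ∈ Finset.range n, (f (X k ω) - predMean P X f k ω)) ^ 2 ∂P := by
      simp_rw [hGeq, mul_pow]
      rw [integral_const_mul]
    rw [he]
    have hkey := key_L2 (P := P) hX hf hC0 hC n
    calc ((n:ℝ)⁻¹) ^ 2
        * ∫ ω, (∑ k ∈ Finset.range n, (f (X k ω) - predMean P X f k ω)) ^ 2 ∂P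
        ≤ ((n:ℝ)⁻¹) ^ 2 * (n * (4 * C ^ 2)) :=
          mul_le_mul_of_nonneg_left hkey (by positivity)
      _ = 4 * C ^ 2 / n := by field_simp
  have hG0 : TendstoInMeasure P G atTop (fun _ => (0:ℝ)) :=
    myTendstoInMeasure_zero_of_L2 hGsqint hG2
  have hsum := myTendstoInMeasure_add hG0 hAl
  have hμl : TendstoInMeasure P
      (fun n ω => (∑ i ∈ Finset.range n, f (X i ω)) / n) atTop l := by
    refine TendstoInMeasure.congr (fun n => ae_of_all _ fun ω => ?_)
      (ae_of_all _ fun ω => by simp) hsum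
    simp only [hG]
    ring
  exact myTendstoInMeasure_unique hμl hc

end Pred

/-- Theorem `09ilmw3`: if each empirical mean `μ_n(f)` converges in probability
to a degenerate (constant) limit, then `α_n(f)` converges in probability for each bounded Borel
`f` iff `lim_n P(X_n ∈ B)` exists for every Borel `B` and
`lim_n E[α_n(f)²] = lim_n (E[f(X_n)])²` for each bounded Borel `f`. -/
theorem stmt4 [MeasurableSpace Ω]
    [TopologicalSpace S] [PolishSpace S] [MeasurableSpace S] [BorelSpace S]
    (P : Measure Ω) [IsProbabilityMeasure P]
    (X : ℕ → Ω → S) (hX : ∀ i, Measurable (X i))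
    (hWLLN : ∀ f : S → ℝ, Measurable f → (∃ C, ∀ x, |f x| ≤ C) →
      ∃ c : ℝ, TendstoInMeasure P
        (fun n ω => (∑ i ∈ Finset.range n, f (X i ω)) / n) atTop (fun _ => c)) :
    (∀ f : S → ℝ, Measurable f → (∃ C, ∀ x, |f x| ≤ C) →
      ∃ l : Ω → ℝ, TendstoInMeasure P (fun n => predMean P X f n) atTop l) ↔
    ((∀ B : Set S, MeasurableSet B →
        ∃ L : ℝ, Tendsto (fun n => (P (X n ⁻¹' B)).toReal) atTop (𝓝 L)) ∧
      (∀ f : S → ℝ, Measurable f → (∃ C, ∀ x, |f x| ≤ C) →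
        ∃ L : ℝ, Tendsto (fun n => ∫ ω, (predMean P X f n ω) ^ 2 ∂P) atTop (𝓝 L) ∧
          Tendsto (fun n => (∫ ω, f (X n ω) ∂P) ^ 2) atTop (𝓝 L))) := by
  have hle := Filt_le (X := X) hX
  constructor
  · -- (i) → (ii)
    intro hconv
    have main : ∀ f : S → ℝ, Measurable f → ∀ C : ℝ, 0 ≤ C → (∀ x, |f x| ≤ C) →
        ∃ c : ℝ, Tendsto (fun n => ∫ ω, f (X n ω) ∂P) atTop (𝓝 c) ∧
          Tendsto (fun n => ∫ ω, (predMean P X f n ω) ^ 2 ∂P) atTop (𝓝 (c ^ 2)) := by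
      intro f hfm C hC0 hC
      obtain ⟨l, hl⟩ := hconv f hfm ⟨C, hC⟩
      obtain ⟨c, hc⟩ := hWLLN f hfm ⟨C, hC⟩
      have hlc : l =ᵐ[P] fun _ => c := limit_is_constant hX hfm hC0 hC hl hc
      have hpm_meas := predMean_aesm (P := P) hX f
      have hpm_bd := predMean_bd (P := P) (X := X) hC0 hC
      have hpm_int : ∀ k, Integrable (predMean P X f k) P := fun k => integrable_condExp
      have hlm : AEStronglyMeasurable l P :=
        (hl.aemeasurable (fun n => (hpm_meas n).aemeasurable)).aestronglyMeasurable
      have hlb : ∀ᵐ ω ∂P, |l ω| ≤ C := myAeBound_of_tendstoInMeasure hpm_bd hl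
      have hli : Integrable l P := myIntegrable_of_bound hlm C hlb
      have hL1 := myTendsto_L1_of_tendstoInMeasure hpm_meas hlm hpm_bd hlb hl
      have hint_l : ∫ ω, l ω ∂P = c := by
        rw [integral_congr_ae hlc]
        simp
      have hl2c : (fun ω => (l ω) ^ 2) =ᵐ[P] fun _ => c ^ 2 := by
        filter_upwards [hlc] with ω h
        rw [h]
      have hint_l2 : ∫ ω, (l ω) ^ 2 ∂P = c ^ 2 := by
        rw [integral_congr_ae hl2c]
        simp
      refine ⟨c, ?_, ?_⟩
      · have h1 := myTendsto_integral_of_L1 hpm_int hli hL1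
        rw [hint_l] at h1
        exact h1.congr (fun n => predMean_integral hX f n)
      · have h2 := myTendsto_integral_sq_of_L1 hpm_meas hlm hpm_bd hlb hL1
        rwa [hint_l2] at h2
    constructor
    · intro B hB
      set f : S → ℝ := B.indicator (fun _ => (1:ℝ)) with hfdef
      have hfm : Measurable f := measurable_const.indicator hB
      have hfb : ∀ x, |f x| ≤ 1 := by
        intro x
        by_cases hx : x ∈ B <;>
          simp [hfdef, Set.indicator_of_mem, Set.indicator_of_notMem, hx]
      obtain ⟨c, hmean, -⟩ := main f hfm 1 zero_le_one hfb
      refine ⟨c, ?_⟩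
      have h2 : ∀ n, ∫ ω, f (X n ω) ∂P = (P (X n ⁻¹' B)).toReal := by
        intro n
        have he : (fun ω => f (X n ω)) = (X n ⁻¹' B).indicator (fun _ => (1:ℝ)) := by
          funext ω
          by_cases hω : X n ω ∈ B <;>
            simp [hfdef, hω, Set.indicator_of_mem, Set.indicator_of_notMem, Set.mem_preimage]
        rw [he, integral_indicator_const (1:ℝ) ((hX n) hB)]
        simp; rfl
      exact Tendsto.congr h2 hmean
    · rintro f hfm ⟨C₀, hC₀⟩
      obtain ⟨c, hmean, hsq⟩ := main f hfm |C₀| (abs_nonneg _)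
        (fun x => (hC₀ x).trans (le_abs_self _))
      exact ⟨c ^ 2, hsq, hmean.pow 2⟩
  · -- (ii) → (i)
    rintro ⟨hB, hL⟩ f hfm ⟨C₀, hC₀⟩
    set C : ℝ := |C₀| with hCdef
    have hC : ∀ x, |f x| ≤ C := fun x => (hC₀ x).trans (le_abs_self _)
    have hC0 : 0 ≤ C := abs_nonneg _
    obtain ⟨L, hL2, hLa⟩ := hL f hfm ⟨C₀, hC₀⟩
    obtain ⟨L', hL2', hLa'⟩ := hL (fun x => f x + 1) (hfm.add measurable_const)
      ⟨C + 1, fun x => (abs_add_le _ _).trans (by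
        have := hC x
        simp only [abs_one]
        linarith)⟩
    set a : ℕ → ℝ := fun n => ∫ ω, f (X n ω) ∂P with ha
    have hfX_int : ∀ n, Integrable (fun ω => f (X n ω)) P := fun n =>
      myIntegrable_of_bound ((hfm.comp (hX n)).aestronglyMeasurable) C
        (ae_of_all _ fun ω => hC _)
    have hshift : ∀ n, ∫ ω, (f (X n ω) + 1) ∂P = a n + 1 := fun n => by
      rw [integral_add (hfX_int n) (integrable_const 1)]
      simp [ha]
    have hLa'' : Tendsto (fun n => (a n + 1) ^ 2) atTop (𝓝 L') := by
      refine Tendsto.congr (fun n => ?_) hLa'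
      rw [hshift n]
    have haconv : Tendsto a atTop (𝓝 ((L' - L - 1) / 2)) := by
      have h3 : Tendsto (fun n => ((a n + 1) ^ 2 - (a n) ^ 2 - 1) / 2) atTop
          (𝓝 ((L' - L - 1) / 2)) := ((hLa''.sub hLa).sub tendsto_const_nhds).div_const 2
      have he : (fun n => ((a n + 1) ^ 2 - (a n) ^ 2 - 1) / 2) = a := by
        funext n
        ring
      rwa [he] at h3
    set m : ℝ := (L' - L - 1) / 2 with hmdef
    have hm2 : m ^ 2 = L := tendsto_nhds_unique (haconv.pow 2) hLa
    have hmean_pm : ∀ n, ∫ ω, predMean P X f n ω ∂P = a n := fun n =>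
      predMean_integral hX f n
    have hpm_meas := predMean_aesm (P := P) hX f
    have hpm_bd := predMean_bd (P := P) (X := X) hC0 hC
    have hpm_int : ∀ k, Integrable (predMean P X f k) P := fun k => integrable_condExp
    have hsq_int : ∀ n, Integrable (fun ω => (predMean P X f n ω) ^ 2) P := fun n =>
      myIntegrable_sq (hpm_meas n) C (hpm_bd n)
    have hexpand : ∀ n, ∫ ω, (predMean P X f n ω - m) ^ 2 ∂P
        = (∫ ω, (predMean P X f n ω) ^ 2 ∂P) - 2 * m * a n + m ^ 2 := by
      intro n
      have he : ∀ ω, (predMean P X f n ω - m) ^ 2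
          = ((predMean P X f n ω) ^ 2 - 2 * m * predMean P X f n ω) + m ^ 2 := fun ω => by
        ring
      simp_rw [he]
      have hint2 : Integrable (fun ω => 2 * m * predMean P X f n ω) P :=
        (hpm_int n).const_mul (2 * m)
      have hint1 : Integrable (fun ω => predMean P X f n ω ^ 2
          - 2 * m * predMean P X f n ω) P := (hsq_int n).sub hint2
      rw [integral_add hint1 (integrable_const _), integral_sub (hsq_int n) hint2,
        integral_const_mul, hmean_pm n]
      simp
    have hto0 : Tendsto (fun n => ∫ ω, (predMean P X f n ω - m) ^ 2 ∂P) atTop (𝓝 0) := by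
      have h4 : Tendsto (fun n => (∫ ω, (predMean P X f n ω) ^ 2 ∂P) - 2 * m * a n + m ^ 2)
          atTop (𝓝 (L - 2 * m * m + m ^ 2)) :=
        (hL2.sub ((haconv.const_mul (2 * m)))).add tendsto_const_nhds
      have hz : L - 2 * m * m + m ^ 2 = 0 := by
        rw [← hm2]
        ring
      rw [hz] at h4
      exact Tendsto.congr (fun n => (hexpand n).symm) h4
    have hdiff_sq_int : ∀ n, Integrable (fun ω => (predMean P X f n ω - m) ^ 2) P := by
      intro n
      refine myIntegrable_sq ((hpm_meas n).sub aestronglyMeasurable_const) (C + |m|) ?_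
      filter_upwards [hpm_bd n] with ω hω
      calc |predMean P X f n ω - m| ≤ |predMean P X f n ω| + |m| := abs_sub _ _
        _ ≤ C + |m| := by linarith
    have hinmeas : TendstoInMeasure P (fun n ω => predMean P X f n ω - m) atTop
        (fun _ => (0:ℝ)) := myTendstoInMeasure_zero_of_L2 hdiff_sq_int hto0
    have hconstm : TendstoInMeasure P (fun (_ : ℕ) (_ : Ω) => m) atTop (fun _ => m) := by
      rw [tendstoInMeasure_iff_dist]
      intro ε hε
      have hset : {ω : Ω | ε ≤ dist m m} = ∅ := by
        ext ω
        simp [dist_self, not_le.2 hε]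
      simp only [hset, measure_empty]
      exact tendsto_const_nhds
    have hadd := myTendstoInMeasure_add hinmeas hconstm
    refine ⟨fun _ => m, ?_⟩
    refine TendstoInMeasure.congr (fun n => ae_of_all _ fun ω => ?_)
      (ae_of_all _ fun ω => by simp) hadd
    ring
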